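/- Let K be a field, n ≥ 3 an integer, and M_{n,k} = K[V(T'_{n,k})]/I(T'_{n,k}). Then sdepth(M_{n,2}) ≤ n − 1, and for every integer k ≥ 3, sdepth(M_{n,k}) ≤ (n−1)^{k−1} + sdepth(M_{n,k−3}). -/

import Mathlib

set_option maxHeartbeats 1000000


open MvPolynomial

/-- Vertices of the perfect `(n-1)`-ary tree `T'_{n,k}`: level `a` has `(n-1)^a` vertices. -/
abbrev AryVert (n k : ℕ) : Type := Σ a : Fin (k + 1), Fin ((n - 1) ^ (a : ℕ))

/-- The perfect `(n-1)`-ary tree `T'_{n,k}`: the root has degree `n-1`, all other internal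
vertices have degree `n`, and all leaves are at distance `k` from the root.  The vertex `j`
at level `a+1` is a child of vertex `j/(n-1)` at level `a`. -/
def aryTree (n k : ℕ) : SimpleGraph (AryVert n k) :=
  SimpleGraph.fromRel (fun v w =>
    (v.1 : ℕ) + 1 = (w.1 : ℕ) ∧ (v.2 : ℕ) = (w.2 : ℕ) / (n - 1))

/-- The edge ideal `I(G)` of a graph `G`, inside the polynomial ring over `K`
with variables the vertices of `G`. -/
noncomputable def edgeIdeal (K : Type) [Field K] {V : Type} (G : SimpleGraph V) :
    Ideal (MvPolynomial V K) :=
  Ideal.span {p | ∃ v w, G.Adj v w ∧ p = X v * X w}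

/-- The Stanley space `u·K[Z]` inside `S/I`, spanned over `K` by the images of the
monomials `x^u · x^f` with `support f ⊆ Z`. -/
noncomputable def stanleySpace (K : Type) [Field K] {V : Type}
    (I : Ideal (MvPolynomial V K)) (u : V →₀ ℕ) (Z : Set V) :
    Submodule K (MvPolynomial V K ⧸ I) :=
  Submodule.span K {m | ∃ f : V →₀ ℕ, (f.support : Set V) ⊆ Z ∧
    m = Ideal.Quotient.mk I (monomial (u + f) (1 : K))}

/-- A Stanley decomposition of `S/I`: a finite family of Stanley spaces `u_j·K[Z_j]`,
each of them free (that is, the monomial multiples of `u_j` are `K`-linearly independent),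
whose internal direct sum as `K`-vector spaces is all of `S/I`. -/
def IsStanleyDecomp (K : Type) [Field K] {V : Type} (I : Ideal (MvPolynomial V K))
    (r : ℕ) (u : Fin r → (V →₀ ℕ)) (Z : Fin r → Finset V) : Prop :=
  DirectSum.IsInternal (fun j : Fin r => stanleySpace K I (u j) (Z j : Set V)) ∧
  ∀ j : Fin r, LinearIndependent K
    (fun f : {f : V →₀ ℕ // (f.support : Set V) ⊆ (Z j : Set V)} =>
      Ideal.Quotient.mk I (monomial (u j + f.1) (1 : K)))

/-- The Stanley depth of `S/I`: the largest `d` such that there is a Stanley decomposition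
all of whose Stanley spaces `u_j·K[Z_j]` satisfy `|Z_j| ≥ d`. -/
noncomputable def quotSdepth (K : Type) [Field K] (V : Type)
    (I : Ideal (MvPolynomial V K)) : ℕ :=
  sSup {d | ∃ (r : ℕ) (u : Fin r → (V →₀ ℕ)) (Z : Fin r → Finset V),
    IsStanleyDecomp K I r u Z ∧ ∀ j, d ≤ (Z j).card}

section Generic

variable (K : Type) [Field K] {V : Type} (G : SimpleGraph V)

/-- Independence of a set of vertices. -/
def IndepSet (A : Set V) : Prop := ∀ ⦃v w : V⦄, G.Adj v w → v ∈ A → w ∈ A → False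

variable {K G}

lemma IndepSet.mono {A B : Set V} (h : B ⊆ A) (hA : IndepSet G A) : IndepSet G B :=
  fun _ _ hvw hv hw => hA hvw (h hv) (h hw)

lemma coeff_eq_zero_of_mem_edgeIdeal {p : MvPolynomial V K} (hp : p ∈ edgeIdeal K G)
    {g : V →₀ ℕ} (hg : IndepSet G {v | g v ≠ 0}) : coeff g p = 0 := by
  classical
  revert g
  induction hp using Submodule.span_induction with
  | mem x hmem =>
    obtain ⟨v, w, hvw, rfl⟩ := hmem
    intro g hg
    have hx : X v * X w = monomial (Finsupp.single v 1 + Finsupp.single w 1) (1 : K) := by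
      rw [X, X, monomial_mul, one_mul]
    rw [hx, coeff_monomial, if_neg]
    intro h
    subst h
    have hv : (Finsupp.single v 1 + Finsupp.single w 1 : V →₀ ℕ) v ≠ 0 := by
      simp [Finsupp.add_apply, Finsupp.single_apply]
    have hw : (Finsupp.single v 1 + Finsupp.single w 1 : V →₀ ℕ) w ≠ 0 := by
      simp [Finsupp.add_apply, Finsupp.single_apply]
    exact hg hvw hv hw
  | zero => intro g _; simp
  | add x y _ _ hx hy =>
    intro g hg
    rw [coeff_add, hx hg, hy hg, add_zero]
  | smul a x _ hx =>
    intro g hg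
    rw [smul_eq_mul, coeff_mul]
    refine Finset.sum_eq_zero fun q hq => ?_
    rw [Finset.HasAntidiagonal.mem_antidiagonal] at hq
    have hsub : {v : V | q.2 v ≠ 0} ⊆ {v | g v ≠ 0} := by
      intro v hv
      simp only [Set.mem_setOf_eq] at hv ⊢
      have : q.1 v + q.2 v = g v := by rw [← Finsupp.add_apply, hq]
      omega
    have : coeff q.2 x = 0 := hx (hg.mono hsub)
    rw [this, mul_zero]

lemma monomial_mem_edgeIdeal {g : V →₀ ℕ} {v w : V} (h : G.Adj v w)
    (hv : g v ≠ 0) (hw : g w ≠ 0) : monomial g (1 : K) ∈ edgeIdeal K G := by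
  classical
  have hle : Finsupp.single v 1 + Finsupp.single w 1 ≤ g := by
    rw [Finsupp.le_def]
    intro x
    have hne := h.ne
    rcases eq_or_ne v x with rfl | h1
    · have h2 : w ≠ v := fun hh => hne hh.symm
      have hval : (Finsupp.single v 1 + Finsupp.single w 1 : V →₀ ℕ) v = 1 := by
        simp [Finsupp.single_apply, h2]
      rw [hval]
      omega
    · rcases eq_or_ne w x with rfl | h2
      · have hval : (Finsupp.single v 1 + Finsupp.single w 1 : V →₀ ℕ) w = 1 := by
          simp [Finsupp.single_apply, h1]
        rw [hval]
        omega
      · simp [Finsupp.add_apply, Finsupp.single_apply, h1, h2]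
  have : monomial g (1 : K) =
      (X v * X w) * monomial (g - (Finsupp.single v 1 + Finsupp.single w 1)) 1 := by
    rw [X, X, monomial_mul, monomial_mul, one_mul, one_mul,
      add_tsub_cancel_of_le hle]
  rw [this]
  exact Ideal.mul_mem_right _ _ (Ideal.subset_span ⟨v, w, h, rfl⟩)

lemma mk_monomial_eq_zero {g : V →₀ ℕ} (hg : ¬ IndepSet G {v | g v ≠ 0}) :
    Ideal.Quotient.mk (edgeIdeal K G) (monomial g (1 : K)) = 0 := by
  rw [Ideal.Quotient.eq_zero_iff_mem]
  simp only [IndepSet, not_forall, Set.mem_setOf_eq] at hg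
  obtain ⟨v, w, hvw, hv, hw, -⟩ := hg
  exact monomial_mem_edgeIdeal hvw hv hw

end Generic

section Extract

variable {K : Type} [Field K] {V : Type} {G : SimpleGraph V}

lemma stanleySpace_eq_map (u : V →₀ ℕ) (Z : Set V) :
    stanleySpace K (edgeIdeal K G) u Z =
      Submodule.map (Ideal.Quotient.mkₐ K (edgeIdeal K G)).toLinearMap
        (Submodule.span K {p | ∃ f : V →₀ ℕ, (f.support : Set V) ⊆ Z ∧
          p = monomial (u + f) (1 : K)}) := by
  rw [Submodule.map_span, stanleySpace]
  congr 1
  ext m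
  constructor
  · rintro ⟨f, hf, rfl⟩
    exact ⟨monomial (u + f) 1, ⟨f, hf, rfl⟩, by simp [Ideal.Quotient.mkₐ_eq_mk]⟩
  · rintro ⟨p, ⟨f, hf, rfl⟩, rfl⟩
    exact ⟨f, hf, by simp [Ideal.Quotient.mkₐ_eq_mk]⟩

lemma mem_stanleySpace_self {u g f : V →₀ ℕ} {Z : Set V}
    (hf : (f.support : Set V) ⊆ Z) (hg : g = u + f) :
    Ideal.Quotient.mk (edgeIdeal K G) (monomial g (1 : K)) ∈
      stanleySpace K (edgeIdeal K G) u Z :=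
  Submodule.subset_span ⟨f, hf, by rw [hg]⟩

lemma extract_indep {r : ℕ} {u : Fin r → (V →₀ ℕ)} {Z : Fin r → Finset V}
    (h : IsStanleyDecomp K (edgeIdeal K G) r u Z) (j : Fin r) :
    IndepSet G {v | u j v ≠ 0 ∨ v ∈ Z j} := by
  intro v w hvw hv hw
  classical
  set f : V →₀ ℕ := Finsupp.indicator (Z j) (fun _ _ => 1) with hfdef
  have hsupp : (f.support : Set V) ⊆ (Z j : Set V) := Finsupp.support_indicator_subset _ _
  have hval : ∀ x : V, x ∈ {v | u j v ≠ 0 ∨ v ∈ Z j} → (u j + f) x ≠ 0 := by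
    intro x hx
    rcases hx with hx | hx
    · simp only [Finsupp.add_apply]; omega
    · have : f x = 1 := Finsupp.indicator_of_mem hx _
      simp only [Finsupp.add_apply, this]; omega
  have hzero : Ideal.Quotient.mk (edgeIdeal K G) (monomial (u j + f) (1 : K)) = 0 :=
    mk_monomial_eq_zero (fun hind => hind hvw (hval v hv) (hval w hw))
  have hne := (h.2 j).ne_zero (⟨f, hsupp⟩ : {f : V →₀ ℕ // (f.support : Set V) ⊆ (Z j : Set V)})
  exact hne hzero

lemma extract_cover {r : ℕ} {u : Fin r → (V →₀ ℕ)} {Z : Fin r → Finset V}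
    (h : IsStanleyDecomp K (edgeIdeal K G) r u Z) {g : V →₀ ℕ}
    (hg : IndepSet G {v | g v ≠ 0}) :
    ∃ jf : Fin r × (V →₀ ℕ),
      ((jf.2.support : Set V) ⊆ (Z jf.1 : Set V)) ∧ g = u jf.1 + jf.2 := by
  classical
  by_contra hno
  push_neg at hno
  set I := edgeIdeal K G
  set mkl := (Ideal.Quotient.mkₐ K I).toLinearMap with hmkl
  set T : Fin r → Set (MvPolynomial V K) :=
    fun j => {p | ∃ f : V →₀ ℕ, (f.support : Set V) ⊆ (Z j : Set V) ∧
      p = monomial (u j + f) (1 : K)} with hT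
  have htop : (⨆ j, stanleySpace K I (u j) ((Z j : Set V))) = ⊤ :=
    h.1.submodule_iSup_eq_top
  have hmap : (⨆ j, stanleySpace K I (u j) ((Z j : Set V))) =
      Submodule.map mkl (Submodule.span K (⋃ j, T j)) := by
    rw [Submodule.span_iUnion, Submodule.map_iSup]
    exact iSup_congr fun j => stanleySpace_eq_map (u j) _
  have hmem : Ideal.Quotient.mk I (monomial g (1 : K)) ∈
      Submodule.map mkl (Submodule.span K (⋃ j, T j)) := by
    rw [← hmap, htop]; trivial
  obtain ⟨y, hy, hyeq⟩ := hmem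
  have hyI : monomial g (1 : K) - y ∈ I := by
    rw [← Ideal.Quotient.eq]
    have : mkl y = Ideal.Quotient.mk I y := by simp [hmkl, Ideal.Quotient.mkₐ_eq_mk]
    rw [← hyeq, this]
  have hcy : coeff g y = 0 := by
    have hker : Submodule.span K (⋃ j, T j) ≤ LinearMap.ker (lcoeff K g) := by
      rw [Submodule.span_le]
      rintro p hp
      simp only [Set.mem_iUnion] at hp
      obtain ⟨j, f, hf, rfl⟩ := hp
      have hne : u j + f ≠ g := fun hc => hno ⟨j, f⟩ hf hc.symm
      rw [SetLike.mem_coe, LinearMap.mem_ker, lcoeff_apply, coeff_monomial, if_neg hne]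
    have := hker hy
    rwa [LinearMap.mem_ker, lcoeff_apply] at this
  have h1 : coeff g (monomial g (1 : K) - y) = 1 := by
    simp [coeff_monomial, hcy]
  have h0 : coeff g (monomial g (1 : K) - y) = 0 :=
    coeff_eq_zero_of_mem_edgeIdeal hyI hg
  rw [h1] at h0
  exact one_ne_zero h0

lemma extract_unique {r : ℕ} {u : Fin r → (V →₀ ℕ)} {Z : Fin r → Finset V}
    (h : IsStanleyDecomp K (edgeIdeal K G) r u Z) {g : V →₀ ℕ}
    (hg : IndepSet G {v | g v ≠ 0}) {p q : Fin r × (V →₀ ℕ)}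
    (hp : ((p.2.support : Set V) ⊆ (Z p.1 : Set V)) ∧ g = u p.1 + p.2)
    (hq : ((q.2.support : Set V) ⊆ (Z q.1 : Set V)) ∧ g = u q.1 + q.2) : p = q := by
  classical
  obtain ⟨j, f⟩ := p
  obtain ⟨j', f'⟩ := q
  rcases eq_or_ne j j' with rfl | hne
  · have : f = f' := by
      have := hp.2.symm.trans hq.2
      exact add_left_cancel this
    rw [this]
  · exfalso
    set I := edgeIdeal K G
    have hb1 : Ideal.Quotient.mk I (monomial g (1 : K)) ∈
        stanleySpace K I (u j) ((Z j : Set V)) := mem_stanleySpace_self hp.1 hp.2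
    have hb2 : Ideal.Quotient.mk I (monomial g (1 : K)) ∈
        stanleySpace K I (u j') ((Z j' : Set V)) := mem_stanleySpace_self hq.1 hq.2
    have hdisj := h.1.submodule_iSupIndep j
    have hle : stanleySpace K I (u j') ((Z j' : Set V)) ≤
        ⨆ (i) (_ : i ≠ j), stanleySpace K I (u i) ((Z i : Set V)) :=
      le_iSup₂ (f := fun (i : Fin r) (_ : i ≠ j) =>
        stanleySpace K I (u i) ((Z i : Set V))) j' hne.symm
    have hzero : Ideal.Quotient.mk I (monomial g (1 : K)) = 0 :=
      (Submodule.mem_bot K).mp (hdisj.le_bot ⟨hb1, hle hb2⟩)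
    rw [Ideal.Quotient.eq_zero_iff_mem] at hzero
    have := coeff_eq_zero_of_mem_edgeIdeal hzero hg
    simp [coeff_monomial] at this
end Extract

section Construct

variable {K : Type} [Field K] {V : Type} {G : SimpleGraph V}

/-- Standard exponent vectors: those whose support is an independent set. -/
abbrev StdVec (G : SimpleGraph V) : Type _ := {g : V →₀ ℕ // IndepSet G {v | g v ≠ 0}}

lemma std_linearIndependent :
    LinearIndependent K (fun g : StdVec G =>
      Ideal.Quotient.mk (edgeIdeal K G) (monomial g.1 (1 : K))) := by
  classical
  rw [linearIndependent_iff]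
  intro l hl
  set b : StdVec G → MvPolynomial V K := fun g => monomial g.1 (1 : K) with hb
  set p := Finsupp.linearCombination K b l with hp
  have hmk : Ideal.Quotient.mk (edgeIdeal K G) p = 0 := by
    have happ := Finsupp.apply_linearCombination K
      (Ideal.Quotient.mkₐ K (edgeIdeal K G)).toLinearMap b l
    have hco : ((Ideal.Quotient.mkₐ K (edgeIdeal K G)).toLinearMap ∘ b) =
        fun g : StdVec G => Ideal.Quotient.mk (edgeIdeal K G) (monomial g.1 (1 : K)) := by
      funext g
      simp [hb, Ideal.Quotient.mkₐ_eq_mk]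
    rw [hco, hl] at happ
    rw [hp]
    exact happ
  have pI : p ∈ edgeIdeal K G := (Ideal.Quotient.eq_zero_iff_mem).mp hmk
  ext g0
  have hc : coeff g0.1 p = l g0 := by
    rw [hp, Finsupp.linearCombination_apply, Finsupp.sum, coeff_sum]
    rw [Finset.sum_eq_single g0]
    · simp [hb, coeff_smul, coeff_monomial]
    · intro g _ hne
      have : g.1 ≠ g0.1 := fun hh => hne (Subtype.ext hh)
      simp [hb, coeff_smul, coeff_monomial, this]
    · intro hg
      rw [Finsupp.notMem_support_iff] at hg
      simp [hg]
  have := coeff_eq_zero_of_mem_edgeIdeal pI g0.2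
  rw [hc] at this
  simpa using this

lemma interval_std {r : ℕ} {u : Fin r → (V →₀ ℕ)} {Z : Fin r → Finset V}
    (hind : ∀ j, IndepSet G {v | u j v ≠ 0 ∨ v ∈ Z j}) (j : Fin r)
    {f : V →₀ ℕ} (hf : (f.support : Set V) ⊆ (Z j : Set V)) :
    IndepSet G {v | (u j + f) v ≠ 0} := by
  refine (hind j).mono ?_
  intro v hv
  simp only [Set.mem_setOf_eq, Finsupp.add_apply] at hv ⊢
  by_cases h0 : u j v = 0
  · right
    have : f v ≠ 0 := by omega
    exact hf (Finsupp.mem_support_iff.mpr this)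
  · left; exact h0

lemma stanleySpace_eq_span_image {r : ℕ} {u : Fin r → (V →₀ ℕ)} {Z : Fin r → Finset V}
    (hind : ∀ j, IndepSet G {v | u j v ≠ 0 ∨ v ∈ Z j}) (j : Fin r) :
    stanleySpace K (edgeIdeal K G) (u j) ((Z j : Set V)) =
      Submodule.span K ((fun g : StdVec G =>
          Ideal.Quotient.mk (edgeIdeal K G) (monomial g.1 (1 : K))) ''
        {g : StdVec G | ∃ f : V →₀ ℕ, (f.support : Set V) ⊆ (Z j : Set V) ∧
          g.1 = u j + f}) := by
  rw [stanleySpace]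
  congr 1
  ext m
  constructor
  · rintro ⟨f, hf, rfl⟩
    exact ⟨⟨u j + f, interval_std hind j hf⟩, ⟨f, hf, rfl⟩, rfl⟩
  · rintro ⟨g, ⟨f, hf, hg⟩, rfl⟩
    exact ⟨f, hf, by simp only []; rw [hg]⟩

lemma construct {r : ℕ} {u : Fin r → (V →₀ ℕ)} {Z : Fin r → Finset V}
    (hind : ∀ j, IndepSet G {v | u j v ≠ 0 ∨ v ∈ Z j})
    (hcov : ∀ g : V →₀ ℕ, IndepSet G {v | g v ≠ 0} →
      ∃ jf : Fin r × (V →₀ ℕ),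
        ((jf.2.support : Set V) ⊆ (Z jf.1 : Set V)) ∧ g = u jf.1 + jf.2)
    (huniq : ∀ g : V →₀ ℕ, ∀ p q : Fin r × (V →₀ ℕ),
      ((p.2.support : Set V) ⊆ (Z p.1 : Set V)) ∧ g = u p.1 + p.2 →
      ((q.2.support : Set V) ⊆ (Z q.1 : Set V)) ∧ g = u q.1 + q.2 → p = q) :
    IsStanleyDecomp K (edgeIdeal K G) r u Z := by
  classical
  set I := edgeIdeal K G with hI
  set b : StdVec G → MvPolynomial V K ⧸ I :=
    fun g => Ideal.Quotient.mk I (monomial g.1 (1 : K)) with hb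
  set S : Fin r → Set (StdVec G) := fun j =>
    {g : StdVec G | ∃ f : V →₀ ℕ, (f.support : Set V) ⊆ (Z j : Set V) ∧
      g.1 = u j + f} with hS
  have hspace : ∀ j, stanleySpace K I (u j) ((Z j : Set V)) =
      Submodule.span K (b '' S j) := fun j => stanleySpace_eq_span_image hind j
  constructor
  · apply DirectSum.isInternal_submodule_of_iSupIndep_of_iSup_eq_top
    · -- independence
      intro j
      show Disjoint (stanleySpace K I (u j) ((Z j : Set V)))
        (⨆ (i) (_ : i ≠ j), stanleySpace K I (u i) ((Z i : Set V)))
      rw [hspace j]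
      have hdisjS : Disjoint (S j) (⋃ (i) (_ : i ≠ j), S i) := by
        rw [Set.disjoint_left]
        rintro g ⟨f, hf, hg⟩ hmem
        simp only [Set.mem_iUnion] at hmem
        obtain ⟨i, hij, f', hf', hg'⟩ := hmem
        have := huniq g.1 ⟨j, f⟩ ⟨i, f'⟩ ⟨hf, hg⟩ ⟨hf', hg'⟩
        exact hij (congrArg Prod.fst this).symm
      have hd : Disjoint (Submodule.span K (b '' S j))
          (Submodule.span K (b '' ⋃ (i) (_ : i ≠ j), S i)) :=
        std_linearIndependent.disjoint_span_image hdisjS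
      refine hd.mono_right ?_
      refine iSup₂_le fun i hij => ?_
      rw [hspace i]
      exact Submodule.span_mono (Set.image_mono
        (Set.subset_iUnion₂ (s := fun i (_ : i ≠ j) => S i) i hij))
    · -- spanning
      have hall : ∀ g : V →₀ ℕ, Ideal.Quotient.mk I (monomial g (1 : K)) ∈
          ⨆ j, stanleySpace K I (u j) ((Z j : Set V)) := by
        intro g
        by_cases hstd : IndepSet G {v | g v ≠ 0}
        · obtain ⟨⟨j, f⟩, hf, hg⟩ := hcov g hstd
          exact le_iSup (fun j => stanleySpace K I (u j) ((Z j : Set V))) j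
            (mem_stanleySpace_self hf hg)
        · rw [mk_monomial_eq_zero hstd]
          exact Submodule.zero_mem _
      rw [eq_top_iff]
      intro x _
      obtain ⟨p, rfl⟩ := Ideal.Quotient.mk_surjective x
      set mkl := (Ideal.Quotient.mkₐ K I).toLinearMap with hmkl
      have hspan : Submodule.span K (Set.range fun s : V →₀ ℕ =>
          (monomial s (1 : K) : MvPolynomial V K)) = ⊤ := by
        have := (basisMonomials V K).span_eq
        rwa [coe_basisMonomials] at this
      have h1 : mkl p ∈ Submodule.map mkl (Submodule.span K
          (Set.range fun s : V →₀ ℕ => (monomial s (1 : K) : MvPolynomial V K))) :=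
        ⟨p, by rw [hspan]; trivial, rfl⟩
      rw [Submodule.map_span] at h1
      have himg : (⇑mkl '' Set.range fun s : V →₀ ℕ =>
          (monomial s (1 : K) : MvPolynomial V K)) ⊆
          (↑(⨆ j, stanleySpace K I (u j) ((Z j : Set V))) : Set (MvPolynomial V K ⧸ I)) := by
        rintro _ ⟨_, ⟨g, rfl⟩, rfl⟩
        have : mkl (monomial g (1 : K)) = Ideal.Quotient.mk I (monomial g (1 : K)) := by
          simp [hmkl, Ideal.Quotient.mkₐ_eq_mk]
        rw [SetLike.mem_coe, this]
        exact hall g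
      have h2 : Ideal.Quotient.mk I p = mkl p := by
        simp [hmkl, Ideal.Quotient.mkₐ_eq_mk]
      rw [h2]
      exact (Submodule.span_le.mpr himg) h1
  · -- per-piece linear independence
    intro j
    have hinj : Function.Injective (fun f : {f : V →₀ ℕ //
        (f.support : Set V) ⊆ (Z j : Set V)} =>
        (⟨u j + f.1, interval_std hind j f.2⟩ : StdVec G)) := by
      intro f f' hff
      have := congrArg Subtype.val hff
      simp only at this
      exact Subtype.ext (add_left_cancel this)
    have h3 := std_linearIndependent (K := K) (G := G) |>.comp
      (fun f : {f : V →₀ ℕ // (f.support : Set V) ⊆ (Z j : Set V)} =>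
        (⟨u j + f.1, interval_std hind j f.2⟩ : StdVec G)) hinj
    exact h3

end Construct

section Tree

variable {n k : ℕ}

/-- The level of a vertex. -/
def lvl (v : AryVert n k) : ℕ := v.1.1

/-- The index of a vertex within its level. -/
def idx (v : AryVert n k) : ℕ := v.2.1

lemma AryVert.ext' {v w : AryVert n k} (h1 : lvl v = lvl w) (h2 : idx v = idx w) :
    v = w := by
  rcases v with ⟨⟨a, ha⟩, ⟨i, hi⟩⟩
  rcases w with ⟨⟨b, hb⟩, ⟨j, hj⟩⟩
  dsimp [lvl, idx] at h1 h2
  subst h1; subst h2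
  rfl

lemma idx_lt (v : AryVert n k) : idx v < (n - 1) ^ (lvl v) := v.2.2

lemma lvl_lt (v : AryVert n k) : lvl v < k + 1 := v.1.2

lemma aryTree_adj {v w : AryVert n k} : (aryTree n k).Adj v w ↔
    (lvl v + 1 = lvl w ∧ idx v = idx w / (n - 1)) ∨
      (lvl w + 1 = lvl v ∧ idx w = idx v / (n - 1)) := by
  rw [aryTree, SimpleGraph.fromRel_adj]
  constructor
  · rintro ⟨-, h | h⟩
    · exact Or.inl h
    · exact Or.inr h
  · rintro (⟨h1, h2⟩ | ⟨h1, h2⟩)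
    · exact ⟨fun he => by rw [he] at h1; omega, Or.inl ⟨h1, h2⟩⟩
    · exact ⟨fun he => by rw [he] at h1; omega, Or.inr ⟨h1, h2⟩⟩

lemma adj_lvl {v w : AryVert n k} (h : (aryTree n k).Adj v w) :
    lvl v + 1 = lvl w ∨ lvl w + 1 = lvl v := by
  rcases aryTree_adj.mp h with ⟨h1, -⟩ | ⟨h1, -⟩
  · exact Or.inl h1
  · exact Or.inr h1

lemma exists_parent (hn : 3 ≤ n) {a : ℕ} (v : AryVert n k) (h : lvl v = a + 1) :
    ∃ w : AryVert n k, lvl w = a ∧ (aryTree n k).Adj w v := by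
  have h1 : 0 < n - 1 := by omega
  have hb : idx v / (n - 1) < (n - 1) ^ a := by
    rw [Nat.div_lt_iff_lt_mul h1]
    have := idx_lt v
    rw [h, pow_succ] at this
    exact this
  have ha : a < k + 1 := by have := lvl_lt v; omega
  refine ⟨⟨⟨a, ha⟩, ⟨idx v / (n - 1), hb⟩⟩, rfl, ?_⟩
  rw [aryTree_adj]
  left
  exact ⟨by show a + 1 = lvl v; omega, rfl⟩

lemma exists_child (hn : 3 ≤ n) {a : ℕ} (v : AryVert n k) (h : lvl v = a)
    (ha : a + 1 ≤ k) : ∃ w : AryVert n k, lvl w = a + 1 ∧ (aryTree n k).Adj v w := by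
  have h1 : 0 < n - 1 := by omega
  have hb : idx v * (n - 1) < (n - 1) ^ (a + 1) := by
    rw [pow_succ]
    have := idx_lt v
    rw [h] at this
    exact (Nat.mul_lt_mul_right h1).mpr this
  refine ⟨⟨⟨a + 1, by omega⟩, ⟨idx v * (n - 1), hb⟩⟩, rfl, ?_⟩
  rw [aryTree_adj]
  left
  refine ⟨by show lvl v + 1 = a + 1; omega, ?_⟩
  show idx v = idx v * (n - 1) / (n - 1)
  rw [Nat.mul_div_cancel _ h1]

lemma not_adj_same_lvl {v w : AryVert n k} (h : lvl v = lvl w) :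
    ¬ (aryTree n k).Adj v w := fun ha => by
  rcases adj_lvl ha with h1 | h1 <;> omega

end Tree

section Part1

variable (K : Type) [Field K]

lemma part1 (n : ℕ) (hn : 3 ≤ n) :
    quotSdepth K (AryVert n 2) (edgeIdeal K (aryTree n 2)) ≤ n - 1 := by
  classical
  rw [quotSdepth]
  apply csSup_le'
  rintro d ⟨r, u, Z, hsd, hc⟩
  -- the standard vector supported on level one
  set G := aryTree n 2 with hG
  set gB : AryVert n 2 →₀ ℕ :=
    Finsupp.equivFunOnFinite.symm (fun v => if lvl v = 1 then 1 else 0) with hgBdef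
  have hgB : ∀ v, gB v = if lvl v = 1 then 1 else 0 := fun v => rfl
  have hstd : IndepSet G {v | gB v ≠ 0} := by
    intro v w hvw hv hw
    simp only [Set.mem_setOf_eq, hgB] at hv hw
    have h1 : lvl v = 1 := by by_contra hh; simp [hh] at hv
    have h2 : lvl w = 1 := by by_contra hh; simp [hh] at hw
    exact not_adj_same_lvl (h1.trans h2.symm) hvw
  obtain ⟨⟨j, f⟩, hf0, hgeq0⟩ := extract_cover hsd hstd
  have hf : (f.support : Set (AryVert n 2)) ⊆ (Z j : Set (AryVert n 2)) := hf0
  have hgeq : gB = u j + f := hgeq0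
  have hind := extract_indep hsd j
  set D : Set (AryVert n 2) := {v | u j v ≠ 0 ∨ v ∈ Z j} with hD
  have hBD : ∀ v : AryVert n 2, lvl v = 1 → v ∈ D := by
    intro v hv
    have h1 : u j v + f v = 1 := by
      have := congrFun (congrArg (fun (g : AryVert n 2 →₀ ℕ) => (g : AryVert n 2 → ℕ)) hgeq) v
      simp only [Finsupp.coe_add, Pi.add_apply] at this
      rw [hgB, if_pos hv] at this
      omega
    by_cases h0 : u j v = 0
    · right
      apply hf
      simp only [Finset.mem_coe, Finsupp.mem_support_iff]
      omega
    · left; exact h0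
  have hDB : ∀ v : AryVert n 2, v ∈ D → lvl v = 1 := by
    intro v hv
    by_contra hne
    have hl3 : lvl v < 3 := lvl_lt v
    rcases (by omega : lvl v = 0 ∨ lvl v = 1 ∨ lvl v = 2) with h0 | h0 | h0
    · obtain ⟨w, hw1, hw2⟩ := exists_child hn v h0 (by omega)
      exact hind hw2 hv (hBD w hw1)
    · exact hne h0
    · obtain ⟨w, hw1, hw2⟩ := exists_parent hn v (a := 1) (by omega)
      exact hind hw2 (hBD w hw1) hv
  -- the finset of level-one vertices
  set Bfin : Finset (AryVert n 2) :=
    Finset.univ.map ⟨fun i : Fin ((n - 1) ^ 1) =>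
      (⟨⟨1, by omega⟩, i⟩ : AryVert n 2), fun i i' h => Fin.val_injective (congrArg idx h)⟩ with hBfin
  have hsub : Z j ⊆ Bfin := by
    intro v hv
    have h1 : lvl v = 1 := hDB v (Or.inr hv)
    rcases v with ⟨⟨a, ha⟩, ⟨i, hi⟩⟩
    dsimp [lvl] at h1
    subst h1
    simp only [hBfin, Finset.mem_map, Finset.mem_univ, Function.Embedding.coeFn_mk]
    exact ⟨⟨i, hi⟩, trivial, rfl⟩
  have hcard : Bfin.card = n - 1 := by
    rw [hBfin, Finset.card_map, Finset.card_univ, Fintype.card_fin, pow_one]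
  calc d ≤ (Z j).card := hc j
    _ ≤ Bfin.card := Finset.card_le_card hsub
    _ = n - 1 := hcard

end Part1

section Bound

variable {K : Type} [Field K] {V : Type} [Fintype V] {G : SimpleGraph V}

lemma sdepth_set_bound {d : ℕ}
    (hd : ∃ (r : ℕ) (u : Fin r → (V →₀ ℕ)) (Z : Fin r → Finset V),
      IsStanleyDecomp K (edgeIdeal K G) r u Z ∧ ∀ j, d ≤ (Z j).card) :
    d ≤ Fintype.card V := by
  obtain ⟨r, u, Z, hsd, hc⟩ := hd
  have hstd : IndepSet G {v | (0 : V →₀ ℕ) v ≠ 0} := by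
    intro v w _ hv _
    simp at hv
  obtain ⟨⟨j, f⟩, -, -⟩ := extract_cover hsd hstd
  exact (hc j).trans (Finset.card_le_univ _)

end Bound

section UpDown

variable {n m : ℕ}

/-- The canonical embedding of the small tree's vertices into the big tree. -/
def upV (x : AryVert n m) : AryVert n (m + 3) :=
  ⟨⟨x.1.1, by have := x.1.2; omega⟩, ⟨x.2.1, x.2.2⟩⟩

lemma lvl_upV (x : AryVert n m) : lvl (upV x) = lvl x := rfl

lemma idx_upV (x : AryVert n m) : idx (upV x) = idx x := rfl

lemma lvl_upV_le (x : AryVert n m) : lvl (upV x) ≤ m := by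
  have := lvl_lt x
  rw [lvl_upV]
  omega

lemma upV_inj : Function.Injective (upV (n := n) (m := m)) := by
  intro x y h
  exact AryVert.ext' (by rw [← lvl_upV x, ← lvl_upV y, h])
    (by rw [← idx_upV x, ← idx_upV y, h])

lemma exists_upV {v : AryVert n (m + 3)} (h : lvl v ≤ m) :
    ∃ x : AryVert n m, upV x = v := by
  refine ⟨⟨⟨lvl v, by omega⟩, ⟨idx v, idx_lt v⟩⟩, ?_⟩
  exact AryVert.ext' rfl rfl

lemma adj_upV {x y : AryVert n m} :
    (aryTree n (m + 3)).Adj (upV x) (upV y) ↔ (aryTree n m).Adj x y := by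
  rw [aryTree_adj, aryTree_adj]
  exact Iff.rfl

/-- Restriction of an exponent vector on the big tree to the small tree. -/
noncomputable def pullF (h : AryVert n (m + 3) →₀ ℕ) : AryVert n m →₀ ℕ :=
  Finsupp.equivFunOnFinite.symm (fun x => h (upV x))

lemma pullF_apply (h : AryVert n (m + 3) →₀ ℕ) (x : AryVert n m) :
    pullF h x = h (upV x) := rfl

/-- Extension of an exponent vector on the small tree to the big one,
putting `1` on each vertex of level `m + 2` and `0` on levels `m + 1`, `m + 3`. -/
noncomputable def liftF (h : AryVert n m →₀ ℕ) : AryVert n (m + 3) →₀ ℕ :=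
  Finsupp.equivFunOnFinite.symm (fun v =>
    if hv : lvl v ≤ m then h ⟨⟨lvl v, by omega⟩, ⟨idx v, idx_lt v⟩⟩
    else if lvl v = m + 2 then 1 else 0)

lemma liftF_upV (h : AryVert n m →₀ ℕ) (x : AryVert n m) :
    liftF h (upV x) = h x := by
  show (if hv : lvl (upV x) ≤ m then
      h ⟨⟨lvl (upV x), _⟩, ⟨idx (upV x), _⟩⟩
    else if lvl (upV x) = m + 2 then 1 else 0) = h x
  rw [dif_pos (lvl_upV_le x)]
  exact congrArg h (AryVert.ext' rfl rfl)

lemma liftF_one (h : AryVert n m →₀ ℕ) {v : AryVert n (m + 3)} (hv : lvl v = m + 2) :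
    liftF h v = 1 := by
  show (if hv : lvl v ≤ m then _ else if lvl v = m + 2 then 1 else 0) = 1
  rw [dif_neg (by omega), if_pos hv]

lemma liftF_zero (h : AryVert n m →₀ ℕ) {v : AryVert n (m + 3)}
    (hv : lvl v = m + 1 ∨ lvl v = m + 3) : liftF h v = 0 := by
  show (if hv : lvl v ≤ m then _ else if lvl v = m + 2 then 1 else 0) = 0
  rw [dif_neg (by omega), if_neg (by omega)]

lemma liftF_std {h : AryVert n m →₀ ℕ}
    (hstd : IndepSet (aryTree n m) {x | h x ≠ 0}) :
    IndepSet (aryTree n (m + 3)) {v | liftF h v ≠ 0} := by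
  intro v w hvw hv hw
  simp only [Set.mem_setOf_eq] at hv hw
  have hlv : lvl v < m + 4 := lvl_lt v
  have hlw : lvl w < m + 4 := lvl_lt w
  have hdif := adj_lvl hvw
  have hv' : lvl v ≤ m ∨ lvl v = m + 2 := by
    by_contra hc
    push_neg at hc
    exact hv (liftF_zero h (by omega))
  have hw' : lvl w ≤ m ∨ lvl w = m + 2 := by
    by_contra hc
    push_neg at hc
    exact hw (liftF_zero h (by omega))
  rcases hv' with hv' | hv' <;> rcases hw' with hw' | hw'
  · obtain ⟨x, rfl⟩ := exists_upV hv'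
    obtain ⟨y, rfl⟩ := exists_upV hw'
    rw [liftF_upV] at hv hw
    exact hstd (adj_upV.mp hvw) hv hw
  · omega
  · omega
  · omega

end UpDown

section Part2

variable (K : Type) [Field K]

lemma part2core (n m : ℕ) (hn : 3 ≤ n) (d : ℕ)
    (hd : ∃ (r : ℕ) (u : Fin r → (AryVert n (m + 3) →₀ ℕ))
        (Z : Fin r → Finset (AryVert n (m + 3))),
      IsStanleyDecomp K (edgeIdeal K (aryTree n (m + 3))) r u Z ∧ ∀ j, d ≤ (Z j).card) :
    ∃ (r' : ℕ) (u' : Fin r' → (AryVert n m →₀ ℕ))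
        (Z' : Fin r' → Finset (AryVert n m)),
      IsStanleyDecomp K (edgeIdeal K (aryTree n m)) r' u' Z' ∧
        ∀ j, d - (n - 1) ^ (m + 2) ≤ (Z' j).card := by
  classical
  obtain ⟨r, u, Z, hsd, hc⟩ := hd
  have hindb : ∀ j, IndepSet (aryTree n (m + 3)) {v | u j v ≠ 0 ∨ v ∈ Z j} :=
    fun j => extract_indep hsd j
  set P : Fin r → Prop := fun j => ∃ h : AryVert n m →₀ ℕ,
    IndepSet (aryTree n m) {x | h x ≠ 0} ∧
    ∃ f : AryVert n (m + 3) →₀ ℕ,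
      (f.support : Set (AryVert n (m + 3))) ⊆ (Z j : Set (AryVert n (m + 3))) ∧
      liftF h = u j + f with hP
  -- basic consequences for useful intervals
  have hQ15 : ∀ j, P j → ∀ v : AryVert n (m + 3), lvl v = m + 2 →
      ((u j v ≠ 0 ∨ v ∈ Z j) ∧ u j v ≤ 1 ∧ (u j v = 0 → v ∈ Z j)) := by
    rintro j ⟨h₀, hh₀, f₀, hf₀, heq₀⟩ v hv
    have happ : liftF h₀ v = u j v + f₀ v := by
      have := congrFun (congrArg
        (fun (g : AryVert n (m + 3) →₀ ℕ) => (g : AryVert n (m + 3) → ℕ)) heq₀) v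
      simpa [Finsupp.add_apply] using this
    rw [liftF_one h₀ hv] at happ
    have hZmem : f₀ v ≠ 0 → v ∈ Z j := by
      intro h0
      have : v ∈ f₀.support := Finsupp.mem_support_iff.mpr h0
      exact hf₀ this
    refine ⟨?_, by omega, ?_⟩
    · by_cases h0 : u j v = 0
      · exact Or.inr (hZmem (by omega))
      · exact Or.inl h0
    · intro h0
      exact hZmem (by omega)
  have hQ4 : ∀ j, P j → ∀ v : AryVert n (m + 3),
      lvl v = m + 1 ∨ lvl v = m + 3 → u j v = 0 := by
    rintro j ⟨h₀, hh₀, f₀, hf₀, heq₀⟩ v hv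
    have happ : liftF h₀ v = u j v + f₀ v := by
      have := congrFun (congrArg
        (fun (g : AryVert n (m + 3) →₀ ℕ) => (g : AryVert n (m + 3) → ℕ)) heq₀) v
      simpa [Finsupp.add_apply] using this
    rw [liftF_zero h₀ hv] at happ
    omega
  have hQ3 : ∀ j, P j → ∀ v : AryVert n (m + 3), (u j v ≠ 0 ∨ v ∈ Z j) →
      lvl v ≤ m ∨ lvl v = m + 2 := by
    intro j hPj v hv
    by_contra hcon
    push_neg at hcon
    have hl4 : lvl v < m + 4 := lvl_lt v
    rcases (by omega : lvl v = m + 1 ∨ lvl v = m + 3) with h1 | h1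
    · obtain ⟨w, hw1, hw2⟩ := exists_child hn v h1 (by omega)
      exact hindb j hw2 hv ((hQ15 j hPj w hw1).1)
    · obtain ⟨w, hw1, hw2⟩ := exists_parent hn v (a := m + 2) (by omega)
      exact hindb j hw2 ((hQ15 j hPj w hw1).1) hv
  -- the master claim
  have hmaster : ∀ (j : Fin r), P j → ∀ (h f' : AryVert n m →₀ ℕ),
      (∀ x : AryVert n m, f' x ≠ 0 → upV x ∈ Z j) → h = pullF (u j) + f' →
      (((liftF h - u j).support : Set (AryVert n (m + 3))) ⊆
          (Z j : Set (AryVert n (m + 3)))) ∧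
        liftF h = u j + (liftF h - u j) := by
    intro j hPj h f' hf' hh
    have happ : ∀ x : AryVert n m, h x = u j (upV x) + f' x := by
      intro x
      have := congrFun (congrArg
        (fun (g : AryVert n m →₀ ℕ) => (g : AryVert n m → ℕ)) hh) x
      simpa [Finsupp.add_apply, pullF_apply] using this
    have hle : u j ≤ liftF h := by
      rw [Finsupp.le_def]
      intro v
      have hl4 : lvl v < m + 4 := lvl_lt v
      by_cases hv : lvl v ≤ m
      · obtain ⟨x, rfl⟩ := exists_upV hv
        rw [liftF_upV]
        have := happ x
        omega
      · by_cases hv2 : lvl v = m + 2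
        · rw [liftF_one h hv2]
          exact (hQ15 j hPj v hv2).2.1
        · rw [liftF_zero h (by omega), hQ4 j hPj v (by omega)]
    constructor
    · intro v hv
      simp only [Finset.coe_filter, Set.mem_setOf_eq, Finset.mem_coe,
        Finsupp.mem_support_iff, Finsupp.tsub_apply] at hv
      have hl4 : lvl v < m + 4 := lvl_lt v
      by_cases hlv : lvl v ≤ m
      · obtain ⟨x, rfl⟩ := exists_upV hlv
        rw [liftF_upV] at hv
        have := happ x
        have hfx : f' x ≠ 0 := by omega
        exact hf' x hfx
      · by_cases hv2 : lvl v = m + 2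
        · rw [liftF_one h hv2] at hv
          have hu0 : u j v = 0 := by omega
          exact (hQ15 j hPj v hv2).2.2 hu0
        · rw [liftF_zero h (by omega)] at hv
          omega
    · exact (add_tsub_cancel_of_le hle).symm
  haveI : DecidablePred P := fun j => Classical.propDecidable _
  set r' := Fintype.card {j : Fin r // P j} with hr'
  set e := (Fintype.equivFin {j : Fin r // P j}) with he
  set u' : Fin r' → (AryVert n m →₀ ℕ) := fun i => pullF (u (e.symm i).1) with hu'
  set Z' : Fin r' → Finset (AryVert n m) :=
    fun i => Finset.univ.filter (fun x => upV x ∈ Z (e.symm i).1) with hZ'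
  have hZ'mem : ∀ i x, x ∈ Z' i ↔ upV x ∈ Z (e.symm i).1 := by
    intro i x
    rw [hZ']
    simp
  -- independence of the new tops
  have hind' : ∀ i, IndepSet (aryTree n m) {x | u' i x ≠ 0 ∨ x ∈ Z' i} := by
    intro i x y hxy hx hy
    refine hindb (e.symm i).1 (adj_upV.mpr hxy) ?_ ?_
    · rcases hx with hx | hx
      · exact Or.inl hx
      · exact Or.inr ((hZ'mem i x).mp hx)
    · rcases hy with hy | hy
      · exact Or.inl hy
      · exact Or.inr ((hZ'mem i y).mp hy)
  -- coverage
  have hcov' : ∀ g : AryVert n m →₀ ℕ, IndepSet (aryTree n m) {x | g x ≠ 0} →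
      ∃ jf : Fin r' × (AryVert n m →₀ ℕ),
        ((jf.2.support : Set (AryVert n m)) ⊆ (Z' jf.1 : Set (AryVert n m))) ∧
        g = u' jf.1 + jf.2 := by
    intro h hstd
    obtain ⟨⟨j, f⟩, hf0, heq0⟩ := extract_cover hsd (liftF_std hstd)
    have hf : (f.support : Set (AryVert n (m + 3))) ⊆ (Z j : Set _) := hf0
    have heq : liftF h = u j + f := heq0
    have hPj : P j := ⟨h, hstd, f, hf, heq⟩
    have hi : e.symm (e ⟨j, hPj⟩) = ⟨j, hPj⟩ := e.symm_apply_apply _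
    refine ⟨⟨e ⟨j, hPj⟩, pullF f⟩, ?_, ?_⟩
    · intro x hx
      simp only [Finset.mem_coe, Finsupp.mem_support_iff, pullF_apply] at hx
      rw [Finset.mem_coe, hZ'mem, hi]
      exact hf (Finsupp.mem_support_iff.mpr hx)
    · ext x
      have happ : liftF h (upV x) = u j (upV x) + f (upV x) := by
        have := congrFun (congrArg
          (fun (g : AryVert n (m + 3) →₀ ℕ) => (g : AryVert n (m + 3) → ℕ)) heq) (upV x)
        simpa [Finsupp.add_apply] using this
      rw [liftF_upV] at happ
      rw [Finsupp.add_apply, hu']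
      simp only [hi]
      rw [pullF_apply, pullF_apply]
      exact happ
  -- uniqueness
  have huniq' : ∀ g : AryVert n m →₀ ℕ, ∀ p q : Fin r' × (AryVert n m →₀ ℕ),
      ((p.2.support : Set (AryVert n m)) ⊆ (Z' p.1 : Set (AryVert n m))) ∧
        g = u' p.1 + p.2 →
      ((q.2.support : Set (AryVert n m)) ⊆ (Z' q.1 : Set (AryVert n m))) ∧
        g = u' q.1 + q.2 → p = q := by
    rintro h ⟨i1, f1⟩ ⟨i2, f2⟩ ⟨hs1, he1⟩ ⟨hs2, he2⟩
    have hstd : IndepSet (aryTree n m) {x | h x ≠ 0} := by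
      refine (hind' i1).mono ?_
      intro x hx
      simp only [Set.mem_setOf_eq] at hx ⊢
      have : u' i1 x + f1 x ≠ 0 := by
        rw [← Finsupp.add_apply, ← he1]; exact hx
      by_cases h0 : u' i1 x = 0
      · right
        have hfx : f1 x ≠ 0 := by omega
        exact hs1 (Finsupp.mem_support_iff.mpr hfx)
      · exact Or.inl h0
    have hb1 := hmaster (e.symm i1).1 (e.symm i1).2 h f1
      (fun x hx => (hZ'mem i1 x).mp (hs1 (Finsupp.mem_support_iff.mpr hx))) he1
    have hb2 := hmaster (e.symm i2).1 (e.symm i2).2 h f2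
      (fun x hx => (hZ'mem i2 x).mp (hs2 (Finsupp.mem_support_iff.mpr hx))) he2
    have hjj := extract_unique hsd (liftF_std hstd)
      (p := ((e.symm i1).1, liftF h - u (e.symm i1).1))
      (q := ((e.symm i2).1, liftF h - u (e.symm i2).1)) ⟨hb1.1, hb1.2⟩ ⟨hb2.1, hb2.2⟩
    have hj : (e.symm i1).1 = (e.symm i2).1 := congrArg Prod.fst hjj
    have hii : i1 = i2 := by
      have : e.symm i1 = e.symm i2 := Subtype.ext hj
      exact e.symm.injective this
    subst hii
    have hff : f1 = f2 := by
      have := he1.symm.trans he2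
      exact add_left_cancel this
    rw [hff]
  -- cardinality bound
  have hcard' : ∀ i, d - (n - 1) ^ (m + 2) ≤ (Z' i).card := by
    intro i
    set j := (e.symm i).1 with hj
    have hPj : P j := (e.symm i).2
    have hsplit := Finset.card_filter_add_card_filter_not
      (s := Z j) (p := fun v => lvl v ≤ m)
    have h1 : (Z j).filter (fun v => lvl v ≤ m) = (Z' i).image upV := by
      ext v
      simp only [Finset.mem_filter, Finset.mem_image]
      constructor
      · rintro ⟨hv, hlv⟩
        obtain ⟨x, rfl⟩ := exists_upV hlv
        exact ⟨x, (hZ'mem i x).mpr hv, rfl⟩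
      · rintro ⟨x, hx, rfl⟩
        exact ⟨(hZ'mem i x).mp hx, lvl_upV_le x⟩
    have h1c : ((Z j).filter (fun v => lvl v ≤ m)).card = (Z' i).card := by
      rw [h1, Finset.card_image_of_injective _ upV_inj]
    set Fb : Finset (AryVert n (m + 3)) :=
      Finset.univ.map ⟨fun i : Fin ((n - 1) ^ (m + 2)) =>
        (⟨⟨m + 2, by omega⟩, i⟩ : AryVert n (m + 3)),
        fun i i' h => Fin.val_injective (congrArg idx h)⟩ with hFb
    have hFbcard : Fb.card = (n - 1) ^ (m + 2) := by
      rw [hFb, Finset.card_map, Finset.card_univ, Fintype.card_fin]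
    have h2 : (Z j).filter (fun v => ¬ lvl v ≤ m) ⊆ Fb := by
      intro v hv
      rw [Finset.mem_filter] at hv
      have hlv : lvl v = m + 2 := by
        rcases hQ3 j hPj v (Or.inr hv.1) with h | h
        · exact absurd h hv.2
        · exact h
      rcases v with ⟨⟨a, ha⟩, ⟨x, hx⟩⟩
      dsimp [lvl] at hlv
      subst hlv
      simp only [hFb, Finset.mem_map, Finset.mem_univ, Function.Embedding.coeFn_mk]
      exact ⟨⟨x, hx⟩, trivial, rfl⟩
    have h2c : ((Z j).filter (fun v => ¬ lvl v ≤ m)).card ≤ (n - 1) ^ (m + 2) := by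
      rw [← hFbcard]
      exact Finset.card_le_card h2
    have hdZ : d ≤ (Z j).card := hc j
    omega
  exact ⟨r', u', Z', construct hind' hcov' huniq', hcard'⟩

end Part2

theorem sdepth_aryTree_recursive (K : Type) [Field K] (n : ℕ) (hn : 3 ≤ n) :
    quotSdepth K (AryVert n 2) (edgeIdeal K (aryTree n 2)) ≤ n - 1 ∧
    ∀ k : ℕ, 3 ≤ k →
      quotSdepth K (AryVert n k) (edgeIdeal K (aryTree n k)) ≤
        (n - 1) ^ (k - 1) +
          quotSdepth K (AryVert n (k - 3)) (edgeIdeal K (aryTree n (k - 3))) := by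
  constructor
  · exact part1 K n hn
  · intro k hk
    obtain ⟨m, rfl⟩ : ∃ m, k = m + 3 := ⟨k - 3, by omega⟩
    have e1 : m + 3 - 1 = m + 2 := by omega
    have e2 : m + 3 - 3 = m := by omega
    rw [e1, e2]
    rw [quotSdepth]
    apply csSup_le'
    rintro d hd
    have hmem := part2core K n m hn d hd
    have hbdd : BddAbove {d | ∃ (r : ℕ) (u : Fin r → (AryVert n m →₀ ℕ))
        (Z : Fin r → Finset (AryVert n m)),
        IsStanleyDecomp K (edgeIdeal K (aryTree n m)) r u Z ∧ ∀ j, d ≤ (Z j).card} :=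
      ⟨Fintype.card (AryVert n m), fun x hx => sdepth_set_bound hx⟩
    have hle : d - (n - 1) ^ (m + 2) ≤
        quotSdepth K (AryVert n m) (edgeIdeal K (aryTree n m)) := by
      rw [quotSdepth]
      exact le_csSup hbdd hmem
    omega
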